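/- arXiv:0709.3915 — 2 statements merged into one kernel-verified Lean document; each statement's English description precedes it below -/
import Mathlib

section
/- Under the hypotheses above (expander code with δ > 1/2), for any fractional pseudocodeword x of the fundamental polytope, the number of inequalities active at x is at most (m − |C_frac(x)|)·d_c + 2·|C_frac(x)| + n − |V_frac(x)|. -/
open Finset

private lemma z2cases : ∀ a : ZMod 2, a = 0 ∨ a = 1 := by decide

private lemma z2ne : ∀ a b c : ZMod 2, a ≠ b → a ≠ c → b = c := by decide

/-- Key pair lemma: if two distinct odd patterns both satisfy the forbidden-set
equality at `y` with `0 ≤ y ≤ 1`, then `y` is integral wherever the patterns agree. -/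
private lemma pair_lemma {ι : Type*} [Fintype ι] [DecidableEq ι] (y : ι → ℝ)
    (hy0 : ∀ i, 0 ≤ y i) (hy1 : ∀ i, y i ≤ 1) (z z' : ι → ZMod 2)
    (hz : (∑ i, z i) = 1) (hz' : (∑ i, z' i) = 1)
    (he : (∑ i, (if z i = 1 then 1 - y i else y i)) = (1 : ℝ))
    (he' : (∑ i, (if z' i = 1 then 1 - y i else y i)) = (1 : ℝ))
    (hne : z ≠ z') {j : ι} (hj : z j = z' j) : y j = 0 ∨ y j = 1 := by
  classical
  set t : ι → ℝ := fun i => if z i = 1 then 1 - y i else y i with ht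
  set t' : ι → ℝ := fun i => if z' i = 1 then 1 - y i else y i with ht'
  set E : Finset ι := univ.filter (fun i => z i = z' i) with hE
  set D : Finset ι := univ.filter (fun i => ¬ z i = z' i) with hD
  have htnn : ∀ i, 0 ≤ t i := by
    intro i; simp only [ht]; split
    · linarith [hy1 i]
    · exact hy0 i
  have hsplit : ∑ i ∈ E, (t i + t' i) + ∑ i ∈ D, (t i + t' i) = 2 := by
    rw [Finset.sum_filter_add_sum_filter_not, Finset.sum_add_distrib, he, he']
    norm_num
  have hEterm : ∀ i ∈ E, t i + t' i = 2 * t i := by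
    intro i hi
    have h : z i = z' i := (Finset.mem_filter.mp hi).2
    simp only [ht, ht', ← h]; ring
  have hDterm : ∀ i ∈ D, t i + t' i = 1 := by
    intro i hi
    have hzz : ¬ z i = z' i := (Finset.mem_filter.mp hi).2
    simp only [ht, ht']
    rcases z2cases (z i) with h0 | h1
    · have h1' : z' i = 1 := by
        rcases z2cases (z' i) with h | h
        · exact absurd (h0.trans h.symm) hzz
        · exact h
      have h0' : ¬ z i = 1 := by rw [h0]; decide
      rw [if_neg h0', if_pos h1']; ring
    · have hne1 : ¬ z' i = 1 := fun h => hzz (h1.trans h.symm)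
      rw [if_pos h1, if_neg hne1]; ring
  have hDcard : (D.card : ℝ) + 2 * ∑ i ∈ E, t i = 2 := by
    rw [Finset.sum_congr rfl hEterm, Finset.sum_congr rfl hDterm, Finset.sum_const,
      nsmul_eq_mul, mul_one, ← Finset.mul_sum] at hsplit
    linarith
  have hEnn : 0 ≤ ∑ i ∈ E, t i := Finset.sum_nonneg fun i _ => htnn i
  have hpar : 2 ∣ D.card := by
    have h0 : ∑ i, (z i + z' i) = 0 := by
      rw [Finset.sum_add_distrib, hz, hz']; decide
    have h2 : ∑ i ∈ E, (z i + z' i) + ∑ i ∈ D, (z i + z' i) = 0 := by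
      rw [Finset.sum_filter_add_sum_filter_not]; exact h0
    have hE0 : ∀ i ∈ E, z i + z' i = 0 := by
      intro i hi
      have h : z i = z' i := (Finset.mem_filter.mp hi).2
      have : ∀ a b : ZMod 2, a = b → a + b = 0 := by decide
      exact this _ _ h
    have hD1 : ∀ i ∈ D, z i + z' i = 1 := by
      intro i hi
      have h : ¬ z i = z' i := (Finset.mem_filter.mp hi).2
      have : ∀ a b : ZMod 2, a ≠ b → a + b = 1 := by decide
      exact this _ _ h
    rw [Finset.sum_congr rfl hE0, Finset.sum_congr rfl hD1, Finset.sum_const_zero,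
      Finset.sum_const, nsmul_eq_mul, mul_one, zero_add] at h2
    exact (ZMod.natCast_eq_zero_iff _ 2).mp h2
  have hDne : D.Nonempty := by
    obtain ⟨i, hi⟩ := Function.ne_iff.mp hne
    exact ⟨i, Finset.mem_filter.mpr ⟨Finset.mem_univ _, hi⟩⟩
  have hDle : D.card ≤ 2 := by
    by_contra hlt
    push_neg at hlt
    have : (3 : ℝ) ≤ D.card := by exact_mod_cast hlt
    linarith
  have hD2 : D.card = 2 := by
    have h1 : 0 < D.card := Finset.card_pos.mpr hDne
    omega
  have hEsum0 : ∑ i ∈ E, t i = 0 := by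
    rw [hD2] at hDcard; push_cast at hDcard; linarith
  have hjE : j ∈ E := Finset.mem_filter.mpr ⟨Finset.mem_univ _, hj⟩
  have htj : t j = 0 :=
    (Finset.sum_eq_zero_iff_of_nonneg (fun i _ => htnn i)).mp hEsum0 j hjE
  simp only [ht] at htj
  by_cases hzj : z j = 1
  · right; rw [if_pos hzj] at htj; linarith
  · left; rw [if_neg hzj] at htj; exact htj

/-- A check with a fractional neighbor has at most 2 active forbidden-set inequalities. -/
private lemma frac_check {ι : Type*} [Fintype ι] [DecidableEq ι] (y : ι → ℝ)
    (hy0 : ∀ i, 0 ≤ y i) (hy1 : ∀ i, y i ≤ 1) (p : ι) (hp0 : 0 < y p) (hp1 : y p < 1) :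
    {z : ι → ZMod 2 | (∑ i, z i) = 1 ∧
      (∑ i, (if z i = 1 then 1 - y i else y i)) = (1 : ℝ)}.ncard ≤ 2 := by
  by_contra hlt
  push_neg at hlt
  obtain ⟨z1, h1, z2, h2, z3, h3, h12, h13, h23⟩ :=
    (Set.two_lt_ncard (Set.toFinite _)).mp hlt
  obtain ⟨hz1, he1⟩ := h1
  obtain ⟨hz2, he2⟩ := h2
  obtain ⟨hz3, he3⟩ := h3
  have hfp : ¬ (y p = 0 ∨ y p = 1) := by rintro (h | h) <;> linarith
  have k12 : z1 p ≠ z2 p := fun h => hfp (pair_lemma y hy0 hy1 z1 z2 hz1 hz2 he1 he2 h12 h)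
  have k13 : z1 p ≠ z3 p := fun h => hfp (pair_lemma y hy0 hy1 z1 z3 hz1 hz3 he1 he3 h13 h)
  exact hfp (pair_lemma y hy0 hy1 z2 z3 hz2 hz3 he2 he3 h23 (z2ne _ _ _ k12 k13))

/-- A check with all-integral neighbors has at most `|ι|` active forbidden-set
inequalities. -/
private lemma int_check {ι : Type*} [Fintype ι] [DecidableEq ι] (y : ι → ℝ)
    (hy : ∀ i, y i = 0 ∨ y i = 1) :
    {z : ι → ZMod 2 | (∑ i, z i) = 1 ∧
      (∑ i, (if z i = 1 then 1 - y i else y i)) = (1 : ℝ)}.ncard ≤ Fintype.card ι := by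
  classical
  set b : ι → ZMod 2 := fun i => if y i = 1 then 1 else 0 with hb
  set f : ι → (ι → ZMod 2) := fun i => Function.update b i (b i + 1) with hf
  have hsub : {z : ι → ZMod 2 | (∑ i, z i) = 1 ∧
      (∑ i, (if z i = 1 then 1 - y i else y i)) = (1 : ℝ)} ⊆ Set.range f := by
    rintro z ⟨hz, he⟩
    have hnn : ∀ k, 0 ≤ (if z k = 1 then 1 - y k else y k) := by
      intro k; rcases hy k with h | h <;> split <;> simp [h]
    have htmem : ∀ i, (if z i = 1 then 1 - y i else y i) = 0 ∨
        (if z i = 1 then 1 - y i else y i) = 1 := by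
      intro i; rcases hy i with h | h <;> split <;> simp [h]
    have hex : ∃ i, (if z i = 1 then 1 - y i else y i) ≠ 0 := by
      by_contra hall
      push_neg at hall
      rw [Finset.sum_eq_zero (fun i _ => hall i)] at he
      norm_num at he
    obtain ⟨i, hi⟩ := hex
    have hti : (if z i = 1 then 1 - y i else y i) = 1 := (htmem i).resolve_left hi
    have hrest : ∀ j, j ≠ i → (if z j = 1 then 1 - y j else y j) = 0 := by
      intro j hjne
      have hsum0 : ∑ k ∈ univ.erase i, (if z k = 1 then 1 - y k else y k) = 0 := by
        have hadd := Finset.add_sum_erase univ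
          (fun k => (if z k = 1 then 1 - y k else y k)) (Finset.mem_univ i)
        rw [he] at hadd
        linarith [hti, hadd]
      exact (Finset.sum_eq_zero_iff_of_nonneg (fun k _ => hnn k)).mp hsum0 j
        (Finset.mem_erase.mpr ⟨hjne, Finset.mem_univ j⟩)
    refine ⟨i, ?_⟩
    funext j
    by_cases hji : j = i
    · subst hji
      show Function.update b j (b j + 1) j = z j
      rw [Function.update_self]
      rcases hy j with h | h <;> rcases z2cases (z j) with hzj | hzj <;>
        simp [h, hzj, hb] at hti ⊢ <;> decide
    · have htj := hrest j hji
      show Function.update b i (b i + 1) j = z j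
      rw [Function.update_of_ne hji]
      rcases hy j with h | h <;> rcases z2cases (z j) with hzj | hzj <;>
        simp [h, hzj, hb] at htj ⊢ <;> decide
  calc {z : ι → ZMod 2 | (∑ i, z i) = 1 ∧
      (∑ i, (if z i = 1 then 1 - y i else y i)) = (1 : ℝ)}.ncard
      ≤ (Set.range f).ncard := Set.ncard_le_ncard hsub (Set.toFinite _)
    _ = (f '' Set.univ).ncard := by rw [Set.image_univ]
    _ ≤ (Set.univ : Set ι).ncard := Set.ncard_image_le (Set.toFinite _)
    _ = Fintype.card ι := by rw [Set.ncard_univ, Nat.card_eq_fintype_card]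

/-- The number of inequalities of the fundamental polytope active at a point
`x ∈ ℝ^n`: for each check `a` and each odd-weight local pattern
`z ∈ {0,1}^{N(a)}`, the forbidden-set inequality
`∑_{i : z_i = 0} x_i + ∑_{i : z_i = 1} (1 - x_i) ≥ 1` is active iff it holds with
equality; the box inequality `(i, true)` (resp. `(i, false)`) is active iff `x i = 1`
(resp. `x i = 0`). -/
noncomputable def activeCount (n m : ℕ) (Na : Fin m → Finset (Fin n))
    (x : Fin n → ℝ) : ℕ :=
  (∑ a : Fin m, {z : ↥(Na a) → ZMod 2 | (∑ i, z i) = 1 ∧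
      (∑ i, (if z i = 1 then 1 - x i.1 else x i.1)) = (1 : ℝ)}.ncard)
  + {p : Fin n × Bool | if p.2 then x p.1 = 1 else x p.1 = 0}.ncard

/-- **Active-set bound for fractional pseudocodewords.** For an `(α, δ)`-expander code
with `δ > 1/2`, any fractional pseudocodeword `x` of the fundamental polytope has at
most `(m - |C_frac(x)|)·d_c + 2·|C_frac(x)| + n - |V_frac(x)|` active inequalities. -/
theorem fractional_pseudocodeword_active_set_bound
    (n m dv dc : ℕ) (hn : 0 < n)
    (Na : Fin m → Finset (Fin n))
    (hdc : ∀ a, (Na a).card = dc)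
    (hdv : ∀ i : Fin n, (Finset.univ.filter fun a => i ∈ Na a).card = dv)
    (α δ : ℝ) (hα0 : 0 < α) (hα1 : α < 1) (hδ : 1 / 2 < δ) (hδ1 : δ ≤ 1)
    (hexp : ∀ S : Finset (Fin n), (S.card : ℝ) ≤ α * n →
      δ * dv * S.card ≤ ((Finset.univ.filter fun a => ∃ i ∈ S, i ∈ Na a).card : ℝ))
    (P : Set (Fin n → ℝ))
    (hP : P = {f | (∀ i, 0 ≤ f i ∧ f i ≤ 1) ∧ ∀ a : Fin m,
        (fun i : ↥(Na a) => f i.1) ∈ convexHull ℝ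
          {z : ↥(Na a) → ℝ | (∀ i, z i = 0 ∨ z i = 1) ∧ Even {i | z i = 1}.ncard}})
    (x : Fin n → ℝ) (hx : x ∈ Set.extremePoints ℝ P)
    (hfrac : ∃ i, 0 < x i ∧ x i < 1) :
    (activeCount n m Na x : ℤ) ≤
      ((m : ℤ) - ({a : Fin m | ∃ i ∈ Na a, 0 < x i ∧ x i < 1}.ncard : ℤ)) * dc
        + 2 * ({a : Fin m | ∃ i ∈ Na a, 0 < x i ∧ x i < 1}.ncard : ℤ)
        + (n : ℤ) - ({i : Fin n | 0 < x i ∧ x i < 1}.ncard : ℤ) := by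
  classical
  have hxP := hx.1
  rw [hP] at hxP
  obtain ⟨hbox, -⟩ := hxP
  set Cf : Finset (Fin m) := univ.filter (fun a => ∃ i ∈ Na a, 0 < x i ∧ x i < 1) with hCf
  set Vf : Finset (Fin n) := univ.filter (fun i : Fin n => 0 < x i ∧ x i < 1) with hVf
  have hCset : {a : Fin m | ∃ i ∈ Na a, 0 < x i ∧ x i < 1}.ncard = Cf.card := by
    rw [Set.ncard_eq_toFinset_card']
    simp [hCf, Set.toFinset_setOf]
  have hVset : {i : Fin n | 0 < x i ∧ x i < 1}.ncard = Vf.card := by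
    rw [Set.ncard_eq_toFinset_card']
    simp [hVf, Set.toFinset_setOf]
  -- per-check bound
  have hcheck : ∀ a : Fin m,
      {z : ↥(Na a) → ZMod 2 | (∑ i, z i) = 1 ∧
        (∑ i, (if z i = 1 then 1 - x i.1 else x i.1)) = (1 : ℝ)}.ncard
        ≤ if a ∈ Cf then 2 else dc := by
    intro a
    by_cases ha : a ∈ Cf
    · rw [if_pos ha]
      obtain ⟨i, hiNa, hi0, hi1⟩ := (Finset.mem_filter.mp ha).2
      exact frac_check (fun i : ↥(Na a) => x i.1) (fun i => (hbox i.1).1)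
        (fun i => (hbox i.1).2) ⟨i, hiNa⟩ hi0 hi1
    · rw [if_neg ha]
      have hall : ∀ i : ↥(Na a), x i.1 = 0 ∨ x i.1 = 1 := by
        intro i
        have hni : ¬ (0 < x i.1 ∧ x i.1 < 1) := fun h =>
          ha (Finset.mem_filter.mpr ⟨Finset.mem_univ _, ⟨i.1, i.2, h⟩⟩)
        rcases hbox i.1 with ⟨h0, h1⟩
        by_contra hc
        push_neg at hc
        exact hni ⟨lt_of_le_of_ne h0 (Ne.symm hc.1), lt_of_le_of_ne h1 hc.2⟩
      have := int_check (fun i : ↥(Na a) => x i.1) hall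
      rwa [Fintype.card_coe, hdc a] at this
  have hsum : (∑ a : Fin m, {z : ↥(Na a) → ZMod 2 | (∑ i, z i) = 1 ∧
      (∑ i, (if z i = 1 then 1 - x i.1 else x i.1)) = (1 : ℝ)}.ncard)
      ≤ ∑ a : Fin m, (if a ∈ Cf then 2 else dc) :=
    Finset.sum_le_sum fun a _ => hcheck a
  -- evaluate the right-hand sum
  have hc1 : (univ.filter (fun a : Fin m => a ∈ Cf)) = Cf := by
    rw [Finset.filter_mem_eq_inter, Finset.univ_inter]
  have hcards : Cf.card + (univ.filter (fun a : Fin m => ¬ a ∈ Cf)).card = m := by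
    have := Finset.card_filter_add_card_filter_not
      (s := (univ : Finset (Fin m))) (p := fun a => a ∈ Cf)
    rw [hc1] at this
    simpa using this
  have hsumeval : ∑ a : Fin m, (if a ∈ Cf then 2 else dc)
      = 2 * Cf.card + dc * (univ.filter (fun a : Fin m => ¬ a ∈ Cf)).card := by
    rw [← Finset.sum_filter_add_sum_filter_not univ (fun a => a ∈ Cf)]
    rw [Finset.sum_ite_of_true (by intro a ha; exact (Finset.mem_filter.mp ha).2),
      Finset.sum_ite_of_false (by intro a ha; exact (Finset.mem_filter.mp ha).2)]
    rw [Finset.sum_const, Finset.sum_const, hc1, smul_eq_mul, smul_eq_mul]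
    ring
  -- box inequalities
  have hboxcard : {p : Fin n × Bool | if p.2 then x p.1 = 1 else x p.1 = 0}.ncard
      + Vf.card ≤ n := by
    set S : Set (Fin n × Bool) := {p | if p.2 then x p.1 = 1 else x p.1 = 0} with hS
    have hinj : Set.InjOn Prod.fst S := by
      rintro ⟨i, b⟩ hib ⟨i', b'⟩ hib' (h : i = i')
      subst h
      simp only [hS, Set.mem_setOf_eq] at hib hib'
      congr 1
      by_contra hbb
      have h0 : x i = 0 ∧ x i = 1 := by
        cases b <;> cases b'
        · exact absurd rfl hbb
        · exact ⟨by simpa using hib, by simpa using hib'⟩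
        · exact ⟨by simpa using hib', by simpa using hib⟩
        · exact absurd rfl hbb
      linarith [h0.1, h0.2]
    have himg : Prod.fst '' S ⊆ {i : Fin n | ¬ (0 < x i ∧ x i < 1)} := by
      rintro i ⟨⟨i', b⟩, hib, rfl⟩
      simp only [hS, Set.mem_setOf_eq] at hib
      cases b
      · have hxi : x i' = 0 := by simpa using hib
        intro h
        simp only at h
        linarith [h.1]
      · have hxi : x i' = 1 := by simpa using hib
        intro h
        simp only at h
        linarith [h.2]
    have h1 : S.ncard = (Prod.fst '' S).ncard := (Set.ncard_image_of_injOn hinj).symm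
    have h2 : (Prod.fst '' S).ncard ≤ {i : Fin n | ¬ (0 < x i ∧ x i < 1)}.ncard :=
      Set.ncard_le_ncard himg (Set.toFinite _)
    have h3 : {i : Fin n | 0 < x i ∧ x i < 1}.ncard
        + {i : Fin n | ¬ (0 < x i ∧ x i < 1)}.ncard = n := by
      have := Set.ncard_add_ncard_compl {i : Fin n | 0 < x i ∧ x i < 1}
        (Set.toFinite _) (Set.toFinite _)
      rw [Nat.card_eq_fintype_card, Fintype.card_fin] at this
      have hcompl : {i : Fin n | 0 < x i ∧ x i < 1}ᶜ
          = {i : Fin n | ¬ (0 < x i ∧ x i < 1)} := rfl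
      rw [hcompl] at this
      exact this
    rw [hVset] at h3
    calc S.ncard + Vf.card = (Prod.fst '' S).ncard + Vf.card := by rw [h1]
      _ ≤ {i : Fin n | ¬ (0 < x i ∧ x i < 1)}.ncard + Vf.card := Nat.add_le_add_right h2 _
      _ = n := by rw [Nat.add_comm]; exact h3
  -- assemble
  rw [hCset, hVset]
  unfold activeCount
  have hCle : Cf.card ≤ m := by
    have := Finset.card_le_univ Cf
    simpa using this
  have hc2 : ((univ.filter (fun a : Fin m => ¬ a ∈ Cf)).card : ℤ) = (m : ℤ) - Cf.card := by
    have h : ((Cf.card : ℤ)) + ((univ.filter (fun a : Fin m => ¬ a ∈ Cf)).card : ℤ) = m := by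
      exact_mod_cast hcards
    linarith
  have hmul : ((m : ℤ) - Cf.card) * dc
      = (dc : ℤ) * ((univ.filter (fun a : Fin m => ¬ a ∈ Cf)).card : ℤ) := by
    rw [hc2]; ring
  have hsum' : ((∑ a : Fin m, {z : ↥(Na a) → ZMod 2 | (∑ i, z i) = 1 ∧
      (∑ i, (if z i = 1 then 1 - x i.1 else x i.1)) = (1 : ℝ)}.ncard : ℕ) : ℤ)
      ≤ 2 * (Cf.card : ℤ)
        + (dc : ℤ) * ((univ.filter (fun a : Fin m => ¬ a ∈ Cf)).card : ℤ) := by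
    have := hsum.trans_eq hsumeval
    exact_mod_cast this
  push_cast
  linarith [hsum', hmul, (by exact_mod_cast hboxcard :
    ({p : Fin n × Bool | if p.2 then x p.1 = 1 else x p.1 = 0}.ncard : ℤ)
      + (Vf.card : ℤ) ≤ (n : ℤ))]
end

section
/- In an (α,δ)-expander code with δ > 1/2, for any fractional pseudocodeword, every connected component of the subgraph induced by the fractional bits (together with their adjacent checks) contains more than αn fractional bits. -/
open Finset

lemma second_frac {n : ℕ} (Na : Finset (Fin n)) (x : Fin n → ℝ)
    (hmem : (fun i : ↥Na => x i.1) ∈ convexHull ℝ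
      {z : ↥Na → ℝ | (∀ i, z i = 0 ∨ z i = 1) ∧ Even {i | z i = 1}.ncard})
    (j : Fin n) (hj : j ∈ Na) (hx0 : 0 < x j) (hx1 : x j < 1)
    (hbound : ∀ k, 0 ≤ x k ∧ x k ≤ 1) :
    ∃ k ∈ Na, k ≠ j ∧ 0 < x k ∧ x k < 1 := by
  classical
  by_contra hcon
  push_neg at hcon
  set jj : ↥Na := ⟨j, hj⟩ with hjj
  have hint : ∀ k : ↥Na, k ≠ jj → x k.1 = 0 ∨ x k.1 = 1 := by
    intro k hk
    have hk' : (k : Fin n) ≠ j := fun h => hk (Subtype.ext h)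
    rcases lt_or_eq_of_le (hbound k.1).1 with h0 | h0
    · right
      exact le_antisymm (hbound k.1).2 (hcon k.1 k.2 hk' h0)
    · exact Or.inl h0.symm
  rw [_root_.convexHull_eq] at hmem
  obtain ⟨ι, t, w, z, hw0, hw1, hz, hcm⟩ := hmem
  rw [Finset.centerMass_eq_of_sum_1 _ _ hw1] at hcm
  have happ : ∀ k : ↥Na, ∑ p ∈ t, w p * z p k = x k.1 := by
    intro k
    have := congrFun hcm k
    simpa [Finset.sum_apply] using this
  -- step 1
  have hfix : ∀ p ∈ t, w p ≠ 0 → ∀ k : ↥Na, k ≠ jj → z p k = x k.1 := by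
    intro p hp hwp k hk
    rcases hint k hk with h0 | h0
    · have hsum : ∑ q ∈ t, w q * z q k = 0 := by rw [happ k, h0]
      have hnn : ∀ q ∈ t, 0 ≤ w q * z q k := by
        intro q hq
        have := (hz q hq).1 k
        rcases this with h | h <;> rw [h] <;> [simp; simpa using hw0 q hq]
      have := (Finset.sum_eq_zero_iff_of_nonneg hnn).1 hsum p hp
      rcases mul_eq_zero.1 this with h | h
      · exact absurd h hwp
      · rw [h, h0]
    · have hsum : ∑ q ∈ t, w q * (1 - z q k) = 0 := by
        rw [Finset.sum_congr rfl (fun q _ => mul_one_sub (w q) (z q k)),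
          Finset.sum_sub_distrib, hw1, happ k, h0, sub_self]
      have hnn : ∀ q ∈ t, 0 ≤ w q * (1 - z q k) := by
        intro q hq
        apply mul_nonneg (hw0 q hq)
        rcases (hz q hq).1 k with h | h <;> rw [h] <;> norm_num
      have := (Finset.sum_eq_zero_iff_of_nonneg hnn).1 hsum p hp
      rcases mul_eq_zero.1 this with h | h
      · exact absurd h hwp
      · have : z p k = 1 := by linarith
        rw [this, h0]
  -- step 2
  set A : Set ↥Na := {k | k ≠ jj ∧ x k.1 = 1} with hA
  have hjjA : jj ∉ A := fun h => h.1 rfl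
  set c : ℝ := if Even A.ncard then 0 else 1 with hc
  have hzc : ∀ p ∈ t, w p ≠ 0 → z p jj = c := by
    intro p hp hwp
    have h01 := (hz p hp).1
    have heven := (hz p hp).2
    rcases h01 jj with h0 | h0
    · have hset : {k | z p k = 1} = A := by
        ext k
        by_cases hk : k = jj
        · subst hk
          simp only [Set.mem_setOf_eq, h0, hjj]
          constructor
          · intro h; have h' : z p jj = 1 := h; rw [h0] at h'; norm_num at h'
          · intro h; exact absurd h hjjA
        · simp only [Set.mem_setOf_eq, hfix p hp hwp k hk, hA]
          exact ⟨fun h => ⟨hk, h⟩, fun h => h.2⟩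
      rw [hset] at heven
      rw [h0, hc, if_pos heven]
    · have hset : {k | z p k = 1} = insert jj A := by
        ext k
        by_cases hk : k = jj
        · subst hk; simp [h0]
        · simp only [Set.mem_setOf_eq, hfix p hp hwp k hk, Set.mem_insert_iff, hA]
          exact ⟨fun h => Or.inr ⟨hk, h⟩, fun h => by rcases h with h | h; exact absurd h hk; exact h.2⟩
      rw [hset, Set.ncard_insert_of_notMem hjjA] at heven
      have : ¬ Even A.ncard := by
        intro h
        exact (Nat.even_add_one.mp heven) h
      rw [h0, hc, if_neg this]
  -- step 3
  have hxj : x j = c := by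
    have h1 := happ jj
    have h2 : ∑ p ∈ t, w p * z p jj = ∑ p ∈ t, w p * c := by
      apply Finset.sum_congr rfl
      intro p hp
      by_cases hwp : w p = 0
      · rw [hwp]; ring
      · rw [hzc p hp hwp]
    rw [h2, ← Finset.sum_mul, hw1, one_mul] at h1
    exact h1.symm
  rw [hc] at hxj
  split_ifs at hxj <;> linarith


/-- **Connected components of the fractional subgraph are large.** For an
`(α, δ)`-expander `(d_v, d_c)`-regular code with `δ > 1/2` and any fractional
pseudocodeword `x` of the fundamental polytope, every connected component of the
subgraph induced by the fractional bits (two fractional bits being adjacent when some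
check is adjacent to both) contains more than `αn` fractional bits. -/
theorem fractional_component_large
    (n m dv dc : ℕ) (hn : 0 < n)
    (Na : Fin m → Finset (Fin n))
    (hdc : ∀ a, (Na a).card = dc)
    (hdv : ∀ i : Fin n, (Finset.univ.filter fun a => i ∈ Na a).card = dv)
    (α δ : ℝ) (hα0 : 0 < α) (hα1 : α < 1) (hδ : 1 / 2 < δ) (hδ1 : δ ≤ 1)
    (hexp : ∀ S : Finset (Fin n), (S.card : ℝ) ≤ α * n →
      δ * dv * S.card ≤ ((Finset.univ.filter fun a => ∃ i ∈ S, i ∈ Na a).card : ℝ))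
    (P : Set (Fin n → ℝ))
    (hP : P = {f | (∀ i, 0 ≤ f i ∧ f i ≤ 1) ∧ ∀ a : Fin m,
        (fun i : ↥(Na a) => f i.1) ∈ convexHull ℝ
          {z : ↥(Na a) → ℝ | (∀ i, z i = 0 ∨ z i = 1) ∧ Even {i | z i = 1}.ncard}})
    (x : Fin n → ℝ) (hx : x ∈ Set.extremePoints ℝ P)
    (hfrac : ∃ i, 0 < x i ∧ x i < 1)
    -- adjacency of fractional bits in the induced subgraph `G[V_frac(x)]`
    (adj : Fin n → Fin n → Prop)
    (hadj : adj = fun i j => (0 < x i ∧ x i < 1) ∧ (0 < x j ∧ x j < 1) ∧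
      ∃ a : Fin m, i ∈ Na a ∧ j ∈ Na a) :
    ∀ i : Fin n, 0 < x i ∧ x i < 1 →
      α * n < ({j : Fin n | Relation.ReflTransGen adj i j}.ncard : ℝ) := by
  classical
  intro i hi
  have hxP : x ∈ P := hx.1
  rw [hP] at hxP
  obtain ⟨hxb, hxc⟩ := hxP
  -- all reachable bits are fractional
  have hreach : ∀ j, Relation.ReflTransGen adj i j → 0 < x j ∧ x j < 1 := by
    intro j h
    induction h with
    | refl => exact hi
    | tail _ hbc ih => rw [hadj] at hbc; exact hbc.2.1
  -- i belongs to some check (else x is not an extreme point)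
  have hiA : ∃ a, i ∈ Na a := by
    by_contra h
    push_neg at h
    set ε := min (x i) (1 - x i) with hε
    have hε0 : 0 < ε := lt_min hi.1 (by linarith [hi.2])
    have hε1 : ε ≤ x i := min_le_left _ _
    have hε2 : ε ≤ 1 - x i := min_le_right _ _
    have hupd : ∀ e : ℝ, 0 ≤ x i + e → x i + e ≤ 1 →
        Function.update x i (x i + e) ∈ P := by
      intro e he0 he1
      rw [hP]
      refine ⟨?_, ?_⟩
      · intro k
        by_cases hk : k = i
        · subst hk; rw [Function.update_self]; exact ⟨he0, he1⟩
        · rw [Function.update_of_ne hk]; exact hxb k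
      · intro a
        have heq : (fun k : ↥(Na a) => Function.update x i (x i + e) k.1)
            = fun k : ↥(Na a) => x k.1 := by
          funext k
          refine Function.update_of_ne ?_ _ _
          intro hki
          exact h a (hki ▸ k.2)
        rw [heq]; exact hxc a
    have hyP := hupd ε (by linarith) (by linarith)
    have hzP := hupd (-ε) (by linarith) (by linarith)
    have hseg : x ∈ openSegment ℝ (Function.update x i (x i + ε))
        (Function.update x i (x i + (-ε))) := by
      refine ⟨1/2, 1/2, by norm_num, by norm_num, by norm_num, ?_⟩
      funext k
      by_cases hk : k = i
      · subst hk
        simp [Function.update_self]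
        ring
      · simp [Function.update_of_ne hk]
        ring
    have heq := hx.2 hyP hzP hseg
    have := congrFun heq i
    rw [Function.update_self] at this
    linarith
  have hdv1 : 1 ≤ dv := by
    obtain ⟨a, ha⟩ := hiA
    rw [← hdv i]
    exact Finset.card_pos.mpr ⟨a, mem_filter.mpr ⟨mem_univ a, ha⟩⟩
  set S : Finset (Fin n) := univ.filter (fun j => Relation.ReflTransGen adj i j) with hS
  have hmemS : ∀ j, j ∈ S ↔ Relation.ReflTransGen adj i j := by
    intro j; simp [hS]
  have hiS : i ∈ S := (hmemS i).2 .refl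
  set T : Finset (Fin m) := univ.filter (fun a => ∃ j ∈ S, j ∈ Na a) with hT
  -- every check adjacent to S has at least two neighbors in S
  have hT2 : ∀ a ∈ T, 2 ≤ (Na a ∩ S).card := by
    intro a ha
    rw [hT, mem_filter] at ha
    obtain ⟨-, j, hjS, hjNa⟩ := ha
    have hjf := hreach j ((hmemS j).1 hjS)
    obtain ⟨k, hkNa, hkj, hkf⟩ := second_frac (Na a) x (hxc a) j hjNa hjf.1 hjf.2 hxb
    have hadjjk : adj j k := by
      rw [hadj]; exact ⟨hjf, hkf, a, hjNa, hkNa⟩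
    have hkS : k ∈ S := (hmemS k).2 (Relation.ReflTransGen.tail ((hmemS j).1 hjS) hadjjk)
    have hsub : ({k, j} : Finset (Fin n)) ⊆ Na a ∩ S := by
      intro u hu
      rcases Finset.mem_insert.1 hu with h | h
      · subst h; exact Finset.mem_inter.2 ⟨hkNa, hkS⟩
      · rw [Finset.mem_singleton] at h; subst h; exact Finset.mem_inter.2 ⟨hjNa, hjS⟩
    calc 2 = ({k, j} : Finset (Fin n)).card := (Finset.card_pair hkj).symm
    _ ≤ _ := Finset.card_le_card hsub
  -- double counting
  have hcount : ∑ a ∈ T, (Na a ∩ S).card = dv * S.card := by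
    have h1 : ∑ a ∈ T, (Na a ∩ S).card = ∑ a : Fin m, (Na a ∩ S).card := by
      apply Finset.sum_subset (Finset.subset_univ T)
      intro a _ haT
      rw [hT, mem_filter] at haT
      push_neg at haT
      rw [Finset.card_eq_zero, Finset.eq_empty_iff_forall_notMem]
      intro u hu
      rw [Finset.mem_inter] at hu
      exact haT (mem_univ a) u hu.2 hu.1
    rw [h1]
    have h2 : ∀ a : Fin m, (Na a ∩ S).card = ∑ j ∈ S, if j ∈ Na a then 1 else 0 := by
      intro a
      rw [← Finset.card_filter]
      congr 1
      ext u
      simp [Finset.mem_inter, and_comm]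
    simp_rw [h2]
    rw [Finset.sum_comm]
    have h3 : ∀ j ∈ S, ∑ a : Fin m, (if j ∈ Na a then 1 else 0) = dv := by
      intro j _
      rw [← hdv j, Finset.card_filter]
    rw [Finset.sum_congr rfl h3, Finset.sum_const, smul_eq_mul, mul_comm]
  have h2T : 2 * T.card ≤ dv * S.card := by
    calc 2 * T.card = ∑ _a ∈ T, 2 := by rw [Finset.sum_const, smul_eq_mul, mul_comm]
    _ ≤ ∑ a ∈ T, (Na a ∩ S).card := Finset.sum_le_sum hT2
    _ = dv * S.card := hcount
  by_contra hle
  push_neg at hle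
  have hsetS : {j : Fin n | Relation.ReflTransGen adj i j} = ↑S := by
    ext j; simp [hmemS j]
  rw [hsetS, Set.ncard_coe_finset] at hle
  have hexpS := hexp S hle
  rw [show (univ.filter fun a => ∃ i ∈ S, i ∈ Na a) = T from rfl] at hexpS
  have hTcast : (T.card : ℝ) ≤ dv * S.card / 2 := by
    have : (2 * T.card : ℝ) ≤ (dv * S.card : ℝ) := by exact_mod_cast h2T
    linarith
  have hpos : (0 : ℝ) < (dv : ℝ) * S.card := by
    have h1 : (1 : ℝ) ≤ dv := by exact_mod_cast hdv1
    have h2 : (1 : ℝ) ≤ S.card := by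
      exact_mod_cast Finset.card_pos.mpr ⟨i, hiS⟩
    nlinarith
  nlinarith [hexpS]
end
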